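/- The exponential integral satisfies e^z E₁(z) = Σ_{n=0}^{∞} (1/(z)_{n+1}) ∫₀^∞ (-t)_n e^{-t} dt for Re(z) > 0, where the series converges; equivalently e^z E₁(z) = Σ_{n=0}^{∞} ((-1)^n/(z)_{n+1}) Σ_{ν=0}^{n} S¹(n,ν) ν!. -/

import Mathlib

open Nat Filter MeasureTheory

noncomputable def poch (z : ℂ) (m : ℕ) : ℂ := ∏ i ∈ Finset.range m, (z + i)

def S1 : ℕ → ℕ → ℤ
  | 0, 0 => 1
  | 0, _ + 1 => 0
  | n + 1, 0 => -(n : ℤ) * S1 n 0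
  | n + 1, k + 1 => S1 n k - (n : ℤ) * S1 n (k + 1)

noncomputable def E1 (z : ℂ) : ℂ :=
  ∫ t in Set.Ioi (0 : ℝ), Complex.exp (-(z + t)) / (z + t)

open Set

open Set



lemma S1_zero : ∀ n k, n < k → S1 n k = 0 := by
  intro n
  induction n with
  | zero => intro k hk; cases k with
    | zero => omega
    | succ k => simp [S1]
  | succ n ih =>
    intro k hk
    cases k with
    | zero => omega
    | succ k =>
      rw [S1]
      rw [ih k (by omega), ih (k+1) (by omega)]
      ring

lemma fall_eq : ∀ (n : ℕ) (t : ℝ), (∏ i ∈ Finset.range n, (t - i)) =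
    ∑ ν ∈ Finset.range (n+1), (S1 n ν : ℝ) * t^ν := by
  intro n
  induction n with
  | zero => intro t; simp [S1]
  | succ n ih =>
    intro t
    rw [Finset.prod_range_succ, ih]
    rw [Finset.sum_range_succ' (fun ν => (S1 (n+1) ν : ℝ) * t^ν) (n+1)]
    have h1 : ∑ k ∈ Finset.range (n+1), (S1 n (k+1) : ℝ) * t^(k+1)
        = (∑ ν ∈ Finset.range (n+1), (S1 n ν : ℝ) * t^ν) - (S1 n 0 : ℝ) := by
      have e1 := Finset.sum_range_succ' (fun ν => (S1 n ν : ℝ) * t^ν) (n+1)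
      have e2 := Finset.sum_range_succ (fun ν => (S1 n ν : ℝ) * t^ν) (n+1)
      rw [S1_zero n (n+1) (by omega)] at e2
      simp only [Int.cast_zero, zero_mul, add_zero, pow_zero, mul_one] at e1 e2
      rw [e2] at e1
      linarith
    have h3 : ∑ k ∈ Finset.range (n+1), (S1 n k : ℝ) * t^(k+1)
        = t * ∑ ν ∈ Finset.range (n+1), (S1 n ν : ℝ) * t^ν := by
      rw [Finset.mul_sum]; exact Finset.sum_congr rfl (fun i _ => by ring)
    simp only [S1]
    push_cast
    simp only [sub_mul]
    rw [Finset.sum_sub_distrib]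
    have h4 : ∑ k ∈ Finset.range (n+1), (n : ℝ) * (S1 n (k+1) : ℝ) * t^(k+1)
        = (n:ℝ) * ∑ k ∈ Finset.range (n+1), (S1 n (k+1) : ℝ) * t^(k+1) := by
      rw [Finset.mul_sum]; exact Finset.sum_congr rfl (fun i _ => by ring)
    rw [h4, h1, h3]
    ring

lemma tendsto_pow_exp (n : ℕ) {b : ℝ} (hb : 0 < b) :
    Tendsto (fun t : ℝ => (1+t)^n * Real.exp (-b*t)) atTop (nhds 0) := by
  have h1 : Tendsto (fun y : ℝ => y^n * Real.exp (-y)) atTop (nhds 0) :=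
    Real.tendsto_pow_mul_exp_neg_atTop_nhds_zero n
  have h2 : Tendsto (fun t : ℝ => b*(1+t)) atTop atTop := by
    apply Tendsto.const_mul_atTop hb
    exact tendsto_atTop_add_const_left _ _ tendsto_id
  have h3 := (h1.comp h2).const_mul (Real.exp b / b^n)
  rw [mul_zero] at h3
  apply h3.congr'
  filter_upwards [eventually_ge_atTop (0:ℝ)] with t ht
  have hbn : b^n ≠ 0 := by positivity
  simp only [Function.comp]
  rw [mul_pow]
  rw [show (-(b*(1+t))) = -b + (-b*t) by ring, Real.exp_add]
  field_simp
  have hexp : Real.exp b * Real.exp (-b) = 1 := by rw [← Real.exp_add]; simp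
  linear_combination hexp

lemma int_pow_exp (n : ℕ) {c : ℝ} (hc : 0 < c) :
    IntegrableOn (fun t : ℝ => (1+t)^n * Real.exp (-c*t)) (Ioi 0) := by
  apply integrable_of_isBigO_exp_neg (half_pos hc)
  · fun_prop
  · apply Asymptotics.IsLittleO.isBigO
    rw [Asymptotics.isLittleO_iff_tendsto (fun t ht => absurd ht (Real.exp_ne_zero _))]
    have h := tendsto_pow_exp n (half_pos hc)
    apply h.congr'
    filter_upwards with t
    rw [eq_div_iff (Real.exp_ne_zero _), mul_assoc, ← Real.exp_add]
    ring_nf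

lemma moment (ν : ℕ) : (∫ t in Ioi (0:ℝ), t^ν * Real.exp (-t)) = (ν ! : ℝ) := by
  have h0 : (0:ℝ) < (ν : ℝ) + 1 := by positivity
  have h := Real.Gamma_eq_integral h0
  rw [Real.Gamma_nat_eq_factorial] at h
  rw [h]
  apply setIntegral_congr_fun measurableSet_Ioi
  intro x hx
  simp only
  rw [show ((ν:ℝ) + 1 - 1) = (ν:ℝ) by ring, Real.rpow_natCast]
  ring


lemma prod_neg_eq (n : ℕ) (t : ℝ) :
    (∏ i ∈ Finset.range n, (-t + i)) = (-1 : ℝ)^n * ∏ i ∈ Finset.range n, (t - i) := by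
  rw [show ((-1:ℝ))^n = ∏ _i ∈ Finset.range n, (-1:ℝ) by rw [Finset.prod_const, Finset.card_range], ← Finset.prod_mul_distrib]
  exact Finset.prod_congr rfl (fun i _ => by ring)

lemma int_fall (n : ℕ) : IntegrableOn
    (fun t : ℝ => (∏ i ∈ Finset.range n, (-t + i)) * Real.exp (-t)) (Ioi 0) := by
  apply Integrable.mono' (((int_pow_exp n one_pos).const_mul ((n+1:ℝ)^n)))
  · apply (Continuous.continuousOn (by fun_prop)).aestronglyMeasurable measurableSet_Ioi
  · filter_upwards [ae_restrict_mem measurableSet_Ioi] with t ht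
    rw [Real.norm_eq_abs, abs_mul, Real.abs_exp, Finset.abs_prod]
    rw [show -(1:ℝ)*t = -t by ring, show ((n:ℝ)+1)^n * ((1+t)^n * Real.exp (-t))
      = (((n:ℝ)+1) * (1+t))^n * Real.exp (-t) by rw [mul_pow]; ring]
    apply mul_le_mul_of_nonneg_right _ (Real.exp_pos _).le
    have ht' : (0:ℝ) < t := ht
    calc ∏ i ∈ Finset.range n, |-t + (i:ℝ)| ≤ ∏ _i ∈ Finset.range n, (((n:ℝ)+1) * (1+t)) := by
          apply Finset.prod_le_prod (fun i _ => abs_nonneg _)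
          intro i hi
          rw [Finset.mem_range] at hi
          rw [abs_le]
          have hi' : (i:ℝ) < n := by exact_mod_cast hi
          have hi0 : (0:ℝ) ≤ i := Nat.cast_nonneg i
          have hn0 : (0:ℝ) ≤ n := Nat.cast_nonneg n
          constructor <;> nlinarith
      _ = (((n:ℝ)+1) * (1+t))^n := by rw [Finset.prod_const, Finset.card_range]

lemma int_pow_exp_neg (ν : ℕ) : IntegrableOn (fun t : ℝ => t^ν * Real.exp (-t)) (Ioi 0) := by
  apply Integrable.mono' (int_pow_exp ν one_pos)
  · apply (Continuous.continuousOn (by fun_prop)).aestronglyMeasurable measurableSet_Ioi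
  · filter_upwards [ae_restrict_mem measurableSet_Ioi] with t ht
    have ht' : (0:ℝ) < t := ht
    rw [Real.norm_eq_abs, abs_mul, Real.abs_exp, abs_pow, abs_of_pos ht',
      show -(1:ℝ)*t = -t by ring]
    apply mul_le_mul_of_nonneg_right _ (Real.exp_pos _).le
    apply pow_le_pow_left₀ ht'.le (by linarith)

lemma Jval (n : ℕ) : (∫ t in Ioi (0:ℝ), (∏ i ∈ Finset.range n, (-t + i)) * Real.exp (-t))
    = (-1:ℝ)^n * ∑ ν ∈ Finset.range (n+1), (S1 n ν : ℝ) * (ν ! : ℝ) := by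
  have heq : ∀ t : ℝ, (∏ i ∈ Finset.range n, (-t + i)) * Real.exp (-t)
      = ∑ ν ∈ Finset.range (n+1), ((-1:ℝ)^n * (S1 n ν : ℝ)) * (t^ν * Real.exp (-t)) := by
    intro t
    rw [prod_neg_eq, fall_eq, mul_assoc, Finset.sum_mul, Finset.mul_sum]
    exact Finset.sum_congr rfl (fun i _ => by ring)
  simp_rw [heq]
  rw [integral_finset_sum]
  · rw [Finset.mul_sum]
    apply Finset.sum_congr rfl
    intro ν _
    rw [MeasureTheory.integral_const_mul, moment ν]
    ring
  · intro ν _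
    exact (int_pow_exp_neg ν).const_mul _

lemma choose_le_two_pow (n k : ℕ) : n.choose k ≤ 2^n := by
  rcases le_or_gt k n with h | h
  · calc n.choose k ≤ ∑ i ∈ Finset.range (n+1), n.choose i :=
        Finset.single_le_sum (fun i _ => Nat.zero_le _) (Finset.mem_range.mpr (by omega))
      _ = 2^n := Nat.sum_range_choose n
  · rw [Nat.choose_eq_zero_of_lt h]; exact Nat.zero_le _

lemma nat_key (m K : ℕ) (hK : K ≤ m) :
    (∏ i ∈ Finset.Ico 1 K, (m - i)) ≤ 2^(m-1) * ∏ i ∈ Finset.Ico 1 K, i := by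
  rcases Nat.eq_zero_or_pos K with h | h
  · subst h; simpa using Nat.one_le_two_pow
  have h1 : (∏ i ∈ Finset.Ico 1 K, (m - i)) = (m-1).descFactorial (K-1) := by
    rw [Finset.prod_Ico_eq_prod_range, Nat.descFactorial_eq_prod_range]
    apply Finset.prod_congr rfl
    intro j _; omega
  have h2 : (∏ i ∈ Finset.Ico 1 K, i) = (K-1)! := by
    rw [Finset.prod_Ico_eq_prod_range, ← Finset.prod_range_add_one_eq_factorial]
    apply Finset.prod_congr rfl
    intro j _; omega
  rw [h1, h2, Nat.descFactorial_eq_factorial_mul_choose, mul_comm (2^(m-1))]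
  exact Nat.mul_le_mul_left _ (_root_.choose_le_two_pow _ _)

lemma key_bound {x t : ℝ} (hx : 0 < x) (ht : 0 < t) (N : ℕ) :
    (∏ i ∈ Finset.range N, |(i:ℝ) - t|) ≤
      (1 + t/x) * (2:ℝ)^t * ∏ i ∈ Finset.range N, (x + i) := by
  have h2t : (1:ℝ) ≤ (2:ℝ)^t := by
    rw [show (1:ℝ) = (2:ℝ)^(0:ℝ) by simp]
    exact Real.rpow_le_rpow_of_exponent_le one_le_two ht.le
  rcases Nat.eq_zero_or_pos N with hN | hN
  · subst hN; simp only [Finset.range_zero, Finset.prod_empty, mul_one]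
    nlinarith [div_nonneg ht.le hx.le]
  set m := ⌈t⌉₊ with hm
  have hm1 : 1 ≤ m := Nat.one_le_iff_ne_zero.mpr (by positivity)
  have hmt : t ≤ m := Nat.le_ceil t
  have hmt' : (m:ℝ) - 1 < t := by
    have := Nat.ceil_lt_add_one ht.le
    linarith
  have hppos : ∀ (s : Finset ℕ), (0:ℝ) ≤ ∏ i ∈ s, (x + i) :=
    fun s => Finset.prod_nonneg (fun i _ => by positivity)
  -- split off i = 0
  rw [Finset.range_eq_Ico, Finset.prod_eq_prod_Ico_succ_bot hN, Finset.prod_eq_prod_Ico_succ_bot hN]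
  simp only [Nat.cast_zero, zero_sub, abs_neg, abs_of_pos ht, add_zero]
  -- main claim
  have claim1 : (∏ i ∈ Finset.Ico 1 N, |(i:ℝ) - t|) ≤ (2:ℝ)^t * ∏ i ∈ Finset.Ico 1 N, (x + i) := by
    have stepa : (∏ i ∈ Finset.Ico 1 N, |(i:ℝ) - t|) ≤
        ∏ i ∈ Finset.Ico 1 N, (if i < m then ((m - i : ℕ) : ℝ) else (i:ℝ)) := by
      apply Finset.prod_le_prod (fun i _ => abs_nonneg _)
      intro i hi
      rw [Finset.mem_Ico] at hi
      by_cases hc : i < m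
      · rw [if_pos hc]
        have : (i:ℝ) ≤ (m:ℝ) - 1 := by
          have : (i:ℝ) + 1 ≤ m := by exact_mod_cast hc
          linarith
        rw [abs_of_neg (by linarith), Nat.cast_sub hc.le]
        linarith
      · push_neg at hc
        rw [if_neg (by omega)]
        have : t ≤ (i:ℝ) := le_trans hmt (by exact_mod_cast hc)
        rw [abs_of_nonneg (by linarith)]
        linarith
    have stepc : (∏ i ∈ Finset.Ico 1 N, (if i < m then ((m - i : ℕ) : ℝ) else (i:ℝ)))
        ≤ (2:ℝ)^(m-1 : ℕ) * ∏ i ∈ Finset.Ico 1 N, (i:ℝ) := by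
      rcases le_or_gt N m with hNm | hNm
      · have : (∏ i ∈ Finset.Ico 1 N, (if i < m then ((m - i : ℕ) : ℝ) else (i:ℝ)))
            = ((∏ i ∈ Finset.Ico 1 N, (m - i) : ℕ) : ℝ) := by
          push_cast
          apply Finset.prod_congr rfl
          intro i hi
          rw [Finset.mem_Ico] at hi
          rw [if_pos (by omega), Nat.cast_sub (by omega)]
        rw [this]
        have := nat_key m N hNm
        calc ((∏ i ∈ Finset.Ico 1 N, (m - i) : ℕ) : ℝ)
            ≤ ((2^(m-1) * ∏ i ∈ Finset.Ico 1 N, i : ℕ) : ℝ) := by exact_mod_cast this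
          _ = (2:ℝ)^(m-1:ℕ) * ∏ i ∈ Finset.Ico 1 N, (i:ℝ) := by push_cast; ring
      · have hsplit1 := Finset.prod_Ico_consecutive
            (fun i => (if i < m then ((m - i : ℕ) : ℝ) else (i:ℝ))) hm1 hNm.le
        have hsplit2 := Finset.prod_Ico_consecutive (fun i => (i:ℝ)) hm1 hNm.le
        have hA : (∏ i ∈ Finset.Ico 1 m, (if i < m then ((m - i : ℕ) : ℝ) else (i:ℝ)))
            ≤ (2:ℝ)^(m-1:ℕ) * ∏ i ∈ Finset.Ico 1 m, (i:ℝ) := by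
          have e : (∏ i ∈ Finset.Ico 1 m, (if i < m then ((m - i : ℕ) : ℝ) else (i:ℝ)))
              = ((∏ i ∈ Finset.Ico 1 m, (m - i) : ℕ) : ℝ) := by
            push_cast
            apply Finset.prod_congr rfl
            intro i hi
            rw [Finset.mem_Ico] at hi
            rw [if_pos hi.2]
          rw [e]
          have := nat_key m m le_rfl
          calc ((∏ i ∈ Finset.Ico 1 m, (m - i) : ℕ) : ℝ)
              ≤ ((2^(m-1) * ∏ i ∈ Finset.Ico 1 m, i : ℕ) : ℝ) := by exact_mod_cast this
            _ = (2:ℝ)^(m-1:ℕ) * ∏ i ∈ Finset.Ico 1 m, (i:ℝ) := by push_cast; ring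
        have hB : (∏ i ∈ Finset.Ico m N, (if i < m then ((m - i : ℕ) : ℝ) else (i:ℝ)))
            = ∏ i ∈ Finset.Ico m N, (i:ℝ) := by
          apply Finset.prod_congr rfl
          intro i hi
          rw [Finset.mem_Ico] at hi
          rw [if_neg (by omega)]
        calc (∏ i ∈ Finset.Ico 1 N, (if i < m then ((m - i : ℕ) : ℝ) else (i:ℝ)))
            = (∏ i ∈ Finset.Ico 1 m, (if i < m then ((m - i : ℕ) : ℝ) else (i:ℝ)))
              * ∏ i ∈ Finset.Ico m N, (if i < m then ((m - i : ℕ) : ℝ) else (i:ℝ)) :=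
              hsplit1.symm
          _ ≤ ((2:ℝ)^(m-1:ℕ) * ∏ i ∈ Finset.Ico 1 m, (i:ℝ)) * ∏ i ∈ Finset.Ico m N, (i:ℝ) := by
              rw [hB]
              exact mul_le_mul_of_nonneg_right hA
                (Finset.prod_nonneg (fun i _ => Nat.cast_nonneg i))
          _ = (2:ℝ)^(m-1:ℕ) * ∏ i ∈ Finset.Ico 1 N, (i:ℝ) := by
              rw [← hsplit2]; ring
    have stepd : ((2:ℝ)^(m-1:ℕ) : ℝ) ≤ (2:ℝ)^t := by
      rw [← Real.rpow_natCast 2 (m-1)]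
      apply Real.rpow_le_rpow_of_exponent_le one_le_two
      rw [Nat.cast_sub hm1]
      push_cast
      linarith
    have stepi : (∏ i ∈ Finset.Ico 1 N, (i:ℝ)) ≤ ∏ i ∈ Finset.Ico 1 N, (x + i) := by
      apply Finset.prod_le_prod (fun i _ => Nat.cast_nonneg i)
      intro i _; linarith
    calc (∏ i ∈ Finset.Ico 1 N, |(i:ℝ) - t|)
        ≤ (2:ℝ)^(m-1:ℕ) * ∏ i ∈ Finset.Ico 1 N, (i:ℝ) := stepa.trans stepc
      _ ≤ (2:ℝ)^t * ∏ i ∈ Finset.Ico 1 N, (x + i) := by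
          apply mul_le_mul stepd stepi (Finset.prod_nonneg (fun i _ => Nat.cast_nonneg i))
            (by linarith)
  calc t * ∏ i ∈ Finset.Ico 1 N, |(i:ℝ) - t|
      ≤ t * ((2:ℝ)^t * ∏ i ∈ Finset.Ico 1 N, (x + i)) :=
        mul_le_mul_of_nonneg_left claim1 ht.le
    _ ≤ (1 + t/x) * (2:ℝ)^t * ((x + 0) * ∏ i ∈ Finset.Ico 1 N, (x + i)) := by
        have h1 : t * ((2:ℝ)^t * ∏ i ∈ Finset.Ico 1 N, (x + i))
            = t * (2:ℝ)^t * ∏ i ∈ Finset.Ico 1 N, (x + i) := by ring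
        have h2 : (1 + t/x) * (2:ℝ)^t * ((x + 0) * ∏ i ∈ Finset.Ico 1 N, (x + i))
            = (x + t) * (2:ℝ)^t * ∏ i ∈ Finset.Ico 1 N, (x + i) := by
          field_simp; ring
        rw [h1, h2]
        apply mul_le_mul_of_nonneg_right _ (hppos _)
        nlinarith
    _ = (1 + t/x) * (2:ℝ)^t * (x * ∏ k ∈ Finset.Ico (0+1) N, (x + k)) := by norm_num

lemma ne_zero_of_re_pos {w : ℂ} (h : 0 < w.re) : w ≠ 0 := by
  intro hw; rw [hw] at h; simp at h

lemma zi_re (z : ℂ) (i : ℕ) : (z + i).re = z.re + i := by simp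

lemma zt_re (z : ℂ) (t : ℝ) : (z + t).re = z.re + t := by simp

lemma poch_ne_zero {z : ℂ} (hz : 0 < z.re) (m : ℕ) : poch z m ≠ 0 := by
  apply Finset.prod_ne_zero_iff.mpr
  intro i _
  apply ne_zero_of_re_pos
  rw [zi_re]
  positivity

lemma norm_poch_ge {z : ℂ} (hz : 0 < z.re) (m : ℕ) :
    (∏ i ∈ Finset.range m, (z.re + i)) ≤ ‖poch z m‖ := by
  rw [poch, norm_prod]
  apply Finset.prod_le_prod (fun i _ => by positivity)
  intro i _
  rw [← zi_re z i]
  exact Complex.re_le_norm _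

lemma telescope {z : ℂ} (hz : 0 < z.re) (t : ℝ) (ht : 0 ≤ t) :
    ∀ N, ∑ n ∈ Finset.range N, (∏ i ∈ Finset.range n, (-(t:ℂ) + i)) / poch z (n+1)
      = 1/(z+t) - (∏ i ∈ Finset.range N, (-(t:ℂ) + i)) / ((z+t) * poch z N) := by
  have hzt : (z + t) ≠ 0 := ne_zero_of_re_pos (by rw [zt_re]; linarith)
  intro N
  induction N with
  | zero => simp [poch]
  | succ N ih =>
    rw [Finset.sum_range_succ, ih, Finset.prod_range_succ (f := fun i => (-(t:ℂ) + i))]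
    have hp := poch_ne_zero hz N
    have hp1 := poch_ne_zero hz (N+1)
    have hpe : poch z (N+1) = poch z N * (z + N) := Finset.prod_range_succ _ _
    have hzN : (z + (N:ℂ)) ≠ 0 := by
      apply ne_zero_of_re_pos; rw [zi_re]; positivity
    rw [hpe]
    field_simp
    ring

lemma one_add_sum_le_prod (s : Finset ℕ) (a : ℕ → ℝ) (ha : ∀ i ∈ s, 0 ≤ a i) :
    1 + ∑ i ∈ s, a i ≤ ∏ i ∈ s, (1 + a i) := by
  induction s using Finset.cons_induction with
  | empty => simp
  | cons j s hj ih =>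
    rw [Finset.sum_cons, Finset.prod_cons]
    have haj := ha j (Finset.mem_cons_self _ _)
    have ih' := ih (fun i hi => ha i (Finset.mem_cons.mpr (Or.inr hi)))
    have hsum : 0 ≤ ∑ i ∈ s, a i := Finset.sum_nonneg
      (fun i hi => ha i (Finset.mem_cons.mpr (Or.inr hi)))
    nlinarith

lemma prod_ratio_le {s : ℝ} (hs : 0 < s) (K N : ℕ) (hK : 1 ≤ K) (hKN : K ≤ N) :
    ∏ i ∈ Finset.Ico K N, ((i:ℝ)/((i:ℝ)+s)) ≤
      (1 + s * ((∑ i ∈ Finset.range N, 1/((i:ℝ)+1)) - ∑ i ∈ Finset.range K, 1/((i:ℝ)+1)))⁻¹ := by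
  have hpos : ∀ i ∈ Finset.Ico K N, (0:ℝ) < i := by
    intro i hi; rw [Finset.mem_Ico] at hi
    have : 1 ≤ i := le_trans hK hi.1
    exact_mod_cast Nat.lt_of_lt_of_le Nat.zero_lt_one this
  have h1 : ∏ i ∈ Finset.Ico K N, ((i:ℝ)/((i:ℝ)+s))
      = (∏ i ∈ Finset.Ico K N, (1 + s/(i:ℝ)))⁻¹ := by
    rw [← Finset.prod_inv_distrib]
    apply Finset.prod_congr rfl
    intro i hi
    have := hpos i hi
    field_simp
  rw [h1]
  have h2 : 1 + s * ((∑ i ∈ Finset.range N, 1/((i:ℝ)+1)) - ∑ i ∈ Finset.range K, 1/((i:ℝ)+1))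
      ≤ ∏ i ∈ Finset.Ico K N, (1 + s/(i:ℝ)) := by
    have e1 : (∑ i ∈ Finset.range N, 1/((i:ℝ)+1)) - ∑ i ∈ Finset.range K, 1/((i:ℝ)+1)
        = ∑ i ∈ Finset.Ico K N, 1/((i:ℝ)+1) := (Finset.sum_Ico_eq_sub _ hKN).symm
    rw [e1]
    calc 1 + s * ∑ i ∈ Finset.Ico K N, 1/((i:ℝ)+1)
        ≤ 1 + ∑ i ∈ Finset.Ico K N, s/(i:ℝ) := by
          rw [Finset.mul_sum]
          apply _root_.add_le_add le_rfl
          apply Finset.sum_le_sum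
          intro i hi
          have := hpos i hi
          rw [mul_one_div]
          apply div_le_div_of_nonneg_left hs.le this (by linarith)
      _ ≤ ∏ i ∈ Finset.Ico K N, (1 + s/(i:ℝ)) :=
          one_add_sum_le_prod _ _ (fun i hi => by positivity)
  have hp2 : (0:ℝ) < 1 + s * ((∑ i ∈ Finset.range N, 1/((i:ℝ)+1)) - ∑ i ∈ Finset.range K, 1/((i:ℝ)+1)) := by
    have e1 : (∑ i ∈ Finset.range N, 1/((i:ℝ)+1)) - ∑ i ∈ Finset.range K, 1/((i:ℝ)+1)
        = ∑ i ∈ Finset.Ico K N, 1/((i:ℝ)+1) := (Finset.sum_Ico_eq_sub _ hKN).symm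
    rw [e1]
    have : (0:ℝ) ≤ ∑ i ∈ Finset.Ico K N, 1/((i:ℝ)+1) :=
      Finset.sum_nonneg (fun i hi => by positivity)
    nlinarith
  exact inv_anti₀ hp2 h2
lemma norm_prod_fall (t : ℝ) (N : ℕ) :
    ‖∏ i ∈ Finset.range N, (-(t:ℂ) + i)‖ = ∏ i ∈ Finset.range N, |(i:ℝ) - t| := by
  rw [norm_prod]
  apply Finset.prod_congr rfl
  intro i _
  rw [show (-(t:ℂ) + i) = (((i:ℝ) - t : ℝ) : ℂ) by push_cast; ring, Complex.norm_real,
    Real.norm_eq_abs]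

lemma G_norm_eq {z : ℂ} (hz : 0 < z.re) (t : ℝ) (N : ℕ) :
    ‖((Real.exp (-t) : ℂ) * ∏ i ∈ Finset.range N, (-(t:ℂ) + i)) / ((z + t) * poch z N)‖
      = Real.exp (-t) * (∏ i ∈ Finset.range N, |(i:ℝ) - t|) / (‖z + t‖ * ‖poch z N‖) := by
  rw [norm_div, norm_mul, norm_mul, Complex.norm_real, Real.norm_eq_abs, Real.abs_exp,
    norm_prod_fall]

lemma G_tendsto_pt {z : ℂ} (hz : 0 < z.re) {t : ℝ} (ht : 0 < t) :
    Tendsto (fun N => ((Real.exp (-t) : ℂ) * ∏ i ∈ Finset.range N, (-(t:ℂ) + i))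
        / ((z + t) * poch z N)) atTop (nhds 0) := by
  set x := z.re with hx
  set s := x + t with hs
  have hsp : 0 < s := by positivity
  set K := max 1 ⌈t⌉₊ with hK
  have hK1 : 1 ≤ K := le_max_left _ _
  have hKt : t ≤ K := le_trans (Nat.le_ceil t) (by exact_mod_cast le_max_right 1 ⌈t⌉₊)
  set A := fun N => ∑ i ∈ Finset.range N, 1/((i:ℝ)+1) with hA
  set D := Real.exp (-t) * (∏ i ∈ Finset.range K, |(i:ℝ) - t|)
      / (x * ∏ i ∈ Finset.range K, (x + i)) with hD
  have hDpos : 0 ≤ D := by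
    apply div_nonneg
    · positivity
    · apply mul_nonneg hz.le (Finset.prod_nonneg (fun i _ => by positivity))
  -- upper bound sequence
  set u := fun N => D * (1 + s * (A N - A K))⁻¹ with hu
  have hu0 : Tendsto u atTop (nhds 0) := by
    have h1 : Tendsto (fun N => 1 + s * (A N - A K)) atTop atTop := by
      apply tendsto_atTop_add_const_left
      apply Tendsto.const_mul_atTop hsp
      apply tendsto_atTop_add_const_right
      exact Real.tendsto_sum_range_one_div_nat_succ_atTop
    have := h1.inv_tendsto_atTop.const_mul D
    simpa using this
  apply squeeze_zero_norm' _ hu0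
  filter_upwards [eventually_ge_atTop K] with N hN
  rw [G_norm_eq hz]
  -- denominators
  have hBpos : ∀ M : ℕ, (0:ℝ) < ∏ i ∈ Finset.range M, (x + i) :=
    fun M => Finset.prod_pos (fun i _ => by positivity)
  have hzt_norm : x ≤ ‖z + t‖ := by
    calc x ≤ (z + t).re := by rw [zt_re]; linarith
      _ ≤ ‖z + t‖ := Complex.re_le_norm _
  have step1 : Real.exp (-t) * (∏ i ∈ Finset.range N, |(i:ℝ) - t|) / (‖z + t‖ * ‖poch z N‖)
      ≤ Real.exp (-t) * (∏ i ∈ Finset.range N, |(i:ℝ) - t|) / (x * ∏ i ∈ Finset.range N, (x + i)) := by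
    apply div_le_div_of_nonneg_left
    · positivity
    · exact mul_pos hz (hBpos N)
    · exact mul_le_mul hzt_norm (norm_poch_ge hz N) (hBpos N).le (norm_nonneg _)
  refine le_trans step1 ?_
  -- split products at K
  have hsplit1 : (∏ i ∈ Finset.range N, |(i:ℝ) - t|)
      = (∏ i ∈ Finset.range K, |(i:ℝ) - t|) * ∏ i ∈ Finset.Ico K N, |(i:ℝ) - t| :=
    (Finset.prod_range_mul_prod_Ico _ hN).symm
  have hsplit2 : (∏ i ∈ Finset.range N, (x + (i:ℝ)))
      = (∏ i ∈ Finset.range K, (x + (i:ℝ))) * ∏ i ∈ Finset.Ico K N, (x + (i:ℝ)) :=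
    (Finset.prod_range_mul_prod_Ico _ hN).symm
  have tail_le : (∏ i ∈ Finset.Ico K N, |(i:ℝ) - t|)
      ≤ (∏ i ∈ Finset.Ico K N, (x + (i:ℝ))) * ∏ i ∈ Finset.Ico K N, ((i:ℝ)/((i:ℝ)+s)) := by
    rw [← Finset.prod_mul_distrib]
    apply Finset.prod_le_prod (fun i _ => abs_nonneg _)
    intro i hi
    rw [Finset.mem_Ico] at hi
    have hiK : (K:ℝ) ≤ i := by exact_mod_cast hi.1
    have hit : t ≤ i := le_trans hKt hiK
    have hi1 : (1:ℝ) ≤ i := le_trans (by exact_mod_cast hK1) hiK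
    rw [abs_of_nonneg (by linarith)]
    have hd : (0:ℝ) < (i:ℝ) + s := by linarith
    have hcross : ((i:ℝ) - t) * ((i:ℝ) + s) ≤ ((x + i) * i) := by nlinarith
    calc (i:ℝ) - t ≤ ((x + i) * i) / ((i:ℝ) + s) := (le_div_iff₀ hd).mpr hcross
      _ = (x + (i:ℝ)) * ((i:ℝ)/((i:ℝ)+s)) := by rw [mul_div_assoc]
  have ratio_le := prod_ratio_le hsp K N hK1 hN
  have tailpos : (0:ℝ) < ∏ i ∈ Finset.Ico K N, (x + (i:ℝ)) :=
    Finset.prod_pos (fun i _ => by positivity)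
  have hAmono : A K ≤ A N := by
    apply Finset.sum_le_sum_of_subset_of_nonneg
    · exact Finset.range_subset_range.mpr hN
    · intro i _ _; positivity
  calc Real.exp (-t) * (∏ i ∈ Finset.range N, |(i:ℝ) - t|) / (x * ∏ i ∈ Finset.range N, (x + i))
      ≤ Real.exp (-t) * ((∏ i ∈ Finset.range K, |(i:ℝ) - t|) *
          ((∏ i ∈ Finset.Ico K N, (x + (i:ℝ))) * ∏ i ∈ Finset.Ico K N, ((i:ℝ)/((i:ℝ)+s))))
          / (x * ∏ i ∈ Finset.range N, (x + i)) := by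
        apply (div_le_div_iff_of_pos_right (mul_pos hz (hBpos N))).mpr
        rw [hsplit1]
        apply mul_le_mul_of_nonneg_left _ (Real.exp_pos _).le
        apply mul_le_mul_of_nonneg_left tail_le
          (Finset.prod_nonneg (fun i _ => abs_nonneg _))
      _ = D * ∏ i ∈ Finset.Ico K N, ((i:ℝ)/((i:ℝ)+s)) := by
        rw [hD, hsplit2]
        field_simp
      _ ≤ D * (1 + s * (A N - A K))⁻¹ := by
        apply mul_le_mul_of_nonneg_left ratio_le hDpos
      _ = u N := rfl

lemma bound_int {x : ℝ} (hx : 0 < x) :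
    IntegrableOn (fun t : ℝ => Real.exp (-t) * ((1 + t/x) * Real.exp (t * Real.log 2)) / x)
      (Ioi 0) := by
  have hc : (0:ℝ) < 1 - Real.log 2 := by
    have := Real.log_two_lt_d9
    linarith
  apply Integrable.mono' (((int_pow_exp 1 hc).const_mul ((1 + 1/x)/x)))
  · apply (Continuous.continuousOn (by fun_prop)).aestronglyMeasurable measurableSet_Ioi
  · filter_upwards [ae_restrict_mem measurableSet_Ioi] with t ht
    have ht' : (0:ℝ) < t := ht
    have he : Real.exp (-t) * Real.exp (t * Real.log 2) = Real.exp (-(1 - Real.log 2) * t) := by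
      rw [← Real.exp_add]; ring_nf
    rw [Real.norm_eq_abs, abs_of_nonneg (by positivity)]
    have h1 : (1 + t/x) ≤ (1 + 1/x) * (1 + t)^1 := by
      rw [pow_one]
      have he2 : (1+1/x)*(1+t) = 1 + t/x + (t + 1/x) := by field_simp; ring
      have h0 : (0:ℝ) ≤ 1/x := by positivity
      linarith
    calc Real.exp (-t) * ((1 + t/x) * Real.exp (t * Real.log 2)) / x
        = (1 + t/x) * (Real.exp (-t) * Real.exp (t * Real.log 2)) / x := by ring
      _ = (1 + t/x) * Real.exp (-(1 - Real.log 2) * t) / x := by rw [he]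
      _ ≤ ((1 + 1/x) * (1 + t)^1) * Real.exp (-(1 - Real.log 2) * t) / x := by
          gcongr
      _ = (1 + 1/x)/x * ((1 + t)^1 * Real.exp (-(1 - Real.log 2) * t)) := by ring

lemma G_int_tendsto {z : ℂ} (hz : 0 < z.re) :
    Tendsto (fun N => ∫ t in Ioi (0:ℝ),
        ((Real.exp (-t) : ℂ) * ∏ i ∈ Finset.range N, (-(t:ℂ) + i)) / ((z + t) * poch z N))
      atTop (nhds 0) := by
  set x := z.re with hx
  have h := tendsto_integral_of_dominated_convergence
    (μ := volume.restrict (Ioi (0:ℝ)))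
    (F := fun N t => ((Real.exp (-t) : ℂ) * ∏ i ∈ Finset.range N, (-(t:ℂ) + i))
        / ((z + t) * poch z N))
    (f := fun _ => 0)
    (fun t => Real.exp (-t) * ((1 + t/x) * Real.exp (t * Real.log 2)) / x)
    ?_ (bound_int hz) ?_ ?_
  · simpa using h
  · intro N
    apply ContinuousOn.aestronglyMeasurable _ measurableSet_Ioi
    apply ContinuousOn.div
    · apply Continuous.continuousOn; fun_prop
    · apply Continuous.continuousOn; fun_prop
    · intro t ht
      apply mul_ne_zero
      · exact ne_zero_of_re_pos (by rw [zt_re]; have : (0:ℝ) < t := ht; linarith)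
      · exact poch_ne_zero hz N
  · intro N
    filter_upwards [ae_restrict_mem measurableSet_Ioi] with t ht
    have ht' : (0:ℝ) < t := ht
    rw [G_norm_eq hz]
    have hB : (0:ℝ) < ∏ i ∈ Finset.range N, (x + i) :=
      Finset.prod_pos (fun i _ => by positivity)
    have hzt_norm : x ≤ ‖z + t‖ := by
      calc x ≤ (z + t).re := by rw [zt_re]; linarith
        _ ≤ ‖z + t‖ := Complex.re_le_norm _
    have hb2 : (0:ℝ) < ‖z + t‖ * ‖poch z N‖ := by
      apply mul_pos (lt_of_lt_of_le hz hzt_norm)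
      apply lt_of_lt_of_le _ (norm_poch_ge hz N)
      exact Finset.prod_pos (fun i _ => by positivity)
    have hkey := key_bound hz ht' N
    calc Real.exp (-t) * (∏ i ∈ Finset.range N, |(i:ℝ) - t|) / (‖z + t‖ * ‖poch z N‖)
        ≤ Real.exp (-t) * ((1 + t/x) * (2:ℝ)^t * ∏ i ∈ Finset.range N, (x + i))
            / (x * ∏ i ∈ Finset.range N, (x + i)) := by
          apply div_le_div₀ (by positivity)
            (mul_le_mul_of_nonneg_left hkey (Real.exp_pos _).le)
            (mul_pos hz hB)
            (mul_le_mul hzt_norm (norm_poch_ge hz N) hB.le (norm_nonneg _))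
      _ = Real.exp (-t) * ((1 + t/x) * (2:ℝ)^t) / x := by
          rw [mul_div_mul_comm, mul_div_assoc, div_self hB.ne', mul_one]
          ring
      _ = Real.exp (-t) * ((1 + t/x) * Real.exp (t * Real.log 2)) / x := by
          rw [Real.rpow_def_of_pos (by norm_num : (0:ℝ) < 2), mul_comm (Real.log 2) t]
  · filter_upwards [ae_restrict_mem measurableSet_Ioi] with t ht
    exact G_tendsto_pt hz (by exact ht)

theorem stmt17 (z : ℂ) (hz : 0 < z.re) :
    Tendsto
      (fun N => ∑ n ∈ Finset.range N,
        (1 / poch z (n + 1)) *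
          ((∫ t in Set.Ioi (0 : ℝ),
            (∏ i ∈ Finset.range n, (-t + i)) * Real.exp (-t) : ℝ) : ℂ))
      atTop (nhds (Complex.exp z * E1 z))
    ∧
    Tendsto
      (fun N => ∑ n ∈ Finset.range N,
        ((-1 : ℂ) ^ n / poch z (n + 1)) *
          ∑ ν ∈ Finset.range (n + 1), (S1 n ν : ℂ) * (ν ! : ℂ))
      atTop (nhds (Complex.exp z * E1 z)) := by
  set x := z.re with hxdef
  set H : ℝ → ℂ := fun t => ((Real.exp (-t) : ℝ) : ℂ) / (z + t) with hHdef
  set G : ℕ → ℝ → ℂ := fun N t =>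
    ((Real.exp (-t) : ℂ) * ∏ i ∈ Finset.range N, (-(t:ℂ) + i)) / ((z + t) * poch z N) with hGdef
  set F : ℕ → ℝ → ℂ := fun n t =>
    (((∏ i ∈ Finset.range n, (-t + i)) * Real.exp (-t) : ℝ) : ℂ) / poch z (n+1) with hFdef
  have hFint : ∀ n, IntegrableOn (F n) (Ioi 0) := fun n => ((int_fall n).ofReal).div_const _
  have hzt : ∀ t : ℝ, 0 < t → z + (t:ℂ) ≠ 0 := fun t ht =>
    ne_zero_of_re_pos (by rw [zt_re]; linarith)
  have hH_int : IntegrableOn H (Ioi 0) := by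
    apply Integrable.mono' ((exp_neg_integrableOn_Ioi 0 one_pos).div_const x)
    · apply ContinuousOn.aestronglyMeasurable _ measurableSet_Ioi
      apply ContinuousOn.div
      · apply Continuous.continuousOn; fun_prop
      · apply Continuous.continuousOn; fun_prop
      · intro t ht; exact hzt t ht
    · filter_upwards [ae_restrict_mem measurableSet_Ioi] with t ht
      have ht' : (0:ℝ) < t := ht
      rw [hHdef, norm_div, Complex.norm_real, Real.norm_eq_abs, Real.abs_exp]
      have h1 : x ≤ ‖z + t‖ := by
        calc x ≤ (z + t).re := by rw [zt_re]; linarith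
          _ ≤ ‖z + t‖ := Complex.re_le_norm _
      rw [show -(1:ℝ)*t = -t by ring]
      apply div_le_div₀ (Real.exp_pos _).le le_rfl hz h1
  -- pointwise partial sum identity
  have hpt : ∀ N, ∀ t : ℝ, 0 < t →
      (∑ n ∈ Finset.range N, F n t) = H t - G N t := by
    intro N t ht
    have htel := telescope hz t ht.le N
    have e1 : ∀ n : ℕ, F n t
        = ((∏ i ∈ Finset.range n, (-(t:ℂ) + i)) / poch z (n+1)) * (Real.exp (-t) : ℂ) := by
      intro n
      rw [hFdef]
      push_cast
      ring
    calc (∑ n ∈ Finset.range N, F n t)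
        = (∑ n ∈ Finset.range N, (∏ i ∈ Finset.range n, (-(t:ℂ) + i)) / poch z (n+1))
            * (Real.exp (-t) : ℂ) := by
          rw [Finset.sum_mul]; exact Finset.sum_congr rfl (fun n _ => e1 n)
      _ = (1/(z+t) - (∏ i ∈ Finset.range N, (-(t:ℂ) + i)) / ((z+t) * poch z N))
            * (Real.exp (-t) : ℂ) := by rw [htel]
      _ = H t - G N t := by rw [hHdef, hGdef]; ring
  -- integrability of G N
  have hG_int : ∀ N, IntegrableOn (G N) (Ioi 0) := by
    intro N
    apply Integrable.congr (hH_int.sub (integrable_finset_sum (Finset.range N)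
      (fun n _ => hFint n)))
    filter_upwards [ae_restrict_mem measurableSet_Ioi] with t ht
    simp only [Pi.sub_apply]
    rw [hpt N t ht]
    ring
  -- partial sums
  have hsum_eq : ∀ N, (∑ n ∈ Finset.range N,
      (1 / poch z (n + 1)) *
        ((∫ t in Set.Ioi (0 : ℝ), (∏ i ∈ Finset.range n, (-t + i)) * Real.exp (-t) : ℝ) : ℂ))
      = (∫ t in Ioi (0:ℝ), H t) - ∫ t in Ioi (0:ℝ), G N t := by
    intro N
    have e1 : ∀ n : ℕ, (1 / poch z (n + 1)) *
        ((∫ t in Set.Ioi (0 : ℝ), (∏ i ∈ Finset.range n, (-t + i)) * Real.exp (-t) : ℝ) : ℂ)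
        = ∫ t in Ioi (0:ℝ), F n t := by
      intro n
      rw [hFdef]
      simp only []
      rw [integral_div, show ∀ g : ℝ → ℝ, (∫ t in Ioi (0:ℝ), ((g t : ℝ) : ℂ))
          = (((∫ t in Ioi (0:ℝ), g t) : ℝ) : ℂ) from fun g => integral_ofReal (𝕜 := ℂ),
        one_div, inv_mul_eq_div]
    calc (∑ n ∈ Finset.range N, (1 / poch z (n + 1)) *
          ((∫ t in Set.Ioi (0 : ℝ), (∏ i ∈ Finset.range n, (-t + i)) * Real.exp (-t) : ℝ) : ℂ))
        = ∑ n ∈ Finset.range N, ∫ t in Ioi (0:ℝ), F n t :=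
          Finset.sum_congr rfl (fun n _ => e1 n)
      _ = ∫ t in Ioi (0:ℝ), ∑ n ∈ Finset.range N, F n t :=
          (integral_finset_sum _ (fun n _ => hFint n)).symm
      _ = ∫ t in Ioi (0:ℝ), (H t - G N t) := by
          apply setIntegral_congr_fun measurableSet_Ioi
          intro t ht
          exact hpt N t ht
      _ = (∫ t in Ioi (0:ℝ), H t) - ∫ t in Ioi (0:ℝ), G N t :=
          integral_sub hH_int (hG_int N)
  -- value of the limit
  have hA : Complex.exp z * E1 z = ∫ t in Ioi (0:ℝ), H t := by
    rw [E1, ← smul_eq_mul, ← integral_smul]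
    apply setIntegral_congr_fun measurableSet_Ioi
    intro t _
    show Complex.exp z • (Complex.exp (-(z + ↑t)) / (z + ↑t)) = H t
    rw [smul_eq_mul, hHdef]
    simp only []
    rw [mul_div_assoc', ← Complex.exp_add, Complex.ofReal_exp, Complex.ofReal_neg]
    congr 2
    ring
  have h1 : Tendsto
      (fun N => ∑ n ∈ Finset.range N,
        (1 / poch z (n + 1)) *
          ((∫ t in Set.Ioi (0 : ℝ),
            (∏ i ∈ Finset.range n, (-t + i)) * Real.exp (-t) : ℝ) : ℂ))
      atTop (nhds (Complex.exp z * E1 z)) := by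
    have h0 : Tendsto (fun N => (∫ t in Ioi (0:ℝ), H t) - ∫ t in Ioi (0:ℝ), G N t)
        atTop (nhds ((∫ t in Ioi (0:ℝ), H t) - 0)) :=
      tendsto_const_nhds.sub (G_int_tendsto hz)
    rw [sub_zero] at h0
    rw [hA]
    exact h0.congr (fun N => (hsum_eq N).symm)
  refine ⟨h1, ?_⟩
  have hterm : ∀ n : ℕ, (1 / poch z (n + 1)) *
      ((∫ t in Set.Ioi (0 : ℝ), (∏ i ∈ Finset.range n, (-t + i)) * Real.exp (-t) : ℝ) : ℂ)
      = ((-1 : ℂ) ^ n / poch z (n + 1)) *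
          ∑ ν ∈ Finset.range (n + 1), (S1 n ν : ℂ) * (ν ! : ℂ) := by
    intro n
    rw [Jval n]
    push_cast
    ring
  have : (fun N => ∑ n ∈ Finset.range N,
        ((-1 : ℂ) ^ n / poch z (n + 1)) *
          ∑ ν ∈ Finset.range (n + 1), (S1 n ν : ℂ) * (ν ! : ℂ))
      = (fun N => ∑ n ∈ Finset.range N,
        (1 / poch z (n + 1)) *
          ((∫ t in Set.Ioi (0 : ℝ),
            (∏ i ∈ Finset.range n, (-t + i)) * Real.exp (-t) : ℝ) : ℂ)) := by
    funext N
    exact Finset.sum_congr rfl (fun n _ => (hterm n).symm)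
  rw [this]
  exact h1
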